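/- arXiv:1303.4048 — 2 statements merged into one kernel-verified Lean document; each statement's English description precedes it below -/
import Mathlib

section
/- Let k be odd and let G be a connected k-uniform hypergraph on {1,…,n} with at least one edge. Then zero is not an eigenvalue of the signless Laplacian tensor of G: there is no nonzero x ∈ ℂ^n with ((D+A) x^{k−1})_i = 0 for all i. -/
open Finset

/-- Degree of vertex `i` in the hypergraph with edge set `E`. -/
def hdeg {n : ℕ} (E : Finset (Finset (Fin n))) (i : Fin n) : ℕ :=
  (E.filter fun e => i ∈ e).card

/-- Laplacian tensor action `((D - A) x^{k-1})_i` over ℂ. -/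
noncomputable def lapC (k : ℕ) {n : ℕ} (E : Finset (Finset (Fin n)))
    (x : Fin n → ℂ) (i : Fin n) : ℂ :=
  (hdeg E i : ℂ) * x i ^ (k - 1) -
    ∑ e ∈ E.filter (fun e => i ∈ e), ∏ j ∈ e.erase i, x j

/-- Signless Laplacian tensor action `((D + A) x^{k-1})_i` over ℂ. -/
noncomputable def slapC (k : ℕ) {n : ℕ} (E : Finset (Finset (Fin n)))
    (x : Fin n → ℂ) (i : Fin n) : ℂ :=
  (hdeg E i : ℂ) * x i ^ (k - 1) +
    ∑ e ∈ E.filter (fun e => i ∈ e), ∏ j ∈ e.erase i, x j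

/-- Laplacian tensor action `((D - A) x^{k-1})_i` over ℝ. -/
noncomputable def lapR (k : ℕ) {n : ℕ} (E : Finset (Finset (Fin n)))
    (x : Fin n → ℝ) (i : Fin n) : ℝ :=
  (hdeg E i : ℝ) * x i ^ (k - 1) -
    ∑ e ∈ E.filter (fun e => i ∈ e), ∏ j ∈ e.erase i, x j

/-- Signless Laplacian tensor action `((D + A) x^{k-1})_i` over ℝ. -/
noncomputable def slapR (k : ℕ) {n : ℕ} (E : Finset (Finset (Fin n)))
    (x : Fin n → ℝ) (i : Fin n) : ℝ :=
  (hdeg E i : ℝ) * x i ^ (k - 1) +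
    ∑ e ∈ E.filter (fun e => i ∈ e), ∏ j ∈ e.erase i, x j

/-- The hypergraph with edge set `E` is connected: every pair of distinct vertices is
joined by a chain of edges with consecutive edges intersecting. -/
def HConnected {n : ℕ} (E : Finset (Finset (Fin n))) : Prop :=
  ∀ i j : Fin n, i ≠ j → ∃ m : ℕ, ∃ es : Fin (m + 1) → Finset (Fin n),
    (∀ r, es r ∈ E) ∧ i ∈ es 0 ∧ j ∈ es (Fin.last m) ∧
    ∀ r : Fin m, (es r.castSucc ∩ es r.succ).Nonempty

/-- The complex absolute value, as an `AbsoluteValue`. -/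
noncomputable def Complex.abs : AbsoluteValue ℂ ℝ := NormedField.toAbsoluteValue ℂ

lemma Complex.abs_apply (z : ℂ) : Complex.abs z = ‖z‖ := rfl

lemma Complex.re_le_abs (z : ℂ) : z.re ≤ Complex.abs z := Complex.re_le_norm z

lemma Complex.abs_conj (z : ℂ) : Complex.abs ((starRingEnd ℂ) z) = Complex.abs z :=
  Complex.norm_conj z

lemma Complex.sq_abs (z : ℂ) : Complex.abs z ^ 2 = Complex.normSq z := Complex.sq_norm z

lemma Complex.abs_natCast (m : ℕ) : Complex.abs (m : ℂ) = m := Complex.norm_natCast m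

/-- If complex numbers with prescribed absolute values sum to `card • u`
with each absolute value equal to `|u|`, they are all equal to `u`. -/
lemma aux_all_eq {α : Type*} (F : Finset α) (t : α → ℂ) (u : ℂ) (hu : u ≠ 0)
    (habs : ∀ a ∈ F, Complex.abs (t a) = Complex.abs u)
    (hsum : ∑ a ∈ F, t a = (F.card : ℂ) * u) :
    ∀ a ∈ F, t a = u := by
  have hre : ∀ a ∈ F, (t a * (starRingEnd ℂ) u).re ≤ Complex.normSq u := by
    intro a ha
    calc (t a * (starRingEnd ℂ) u).re ≤ Complex.abs (t a * (starRingEnd ℂ) u) :=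
          Complex.re_le_abs _
      _ = Complex.abs (t a) * Complex.abs u := by
          rw [map_mul, Complex.abs_conj]
      _ = Complex.normSq u := by rw [habs a ha, ← Complex.sq_abs, sq]
  have hsumre : ∑ a ∈ F, (t a * (starRingEnd ℂ) u).re = ∑ a ∈ F, Complex.normSq u := by
    have : ∑ a ∈ F, (t a * (starRingEnd ℂ) u).re
        = ((∑ a ∈ F, t a) * (starRingEnd ℂ) u).re := by
      rw [Finset.sum_mul, Complex.re_sum]
    rw [this, hsum, mul_assoc, Complex.mul_conj]
    simp [mul_comm]
  have heach := (Finset.sum_eq_sum_iff_of_le hre).mp hsumre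
  intro a ha
  set z := t a * (starRingEnd ℂ) u with hz
  have h1 : z.re = Complex.normSq u := heach a ha
  have h2 : Complex.abs z = Complex.normSq u := by
    rw [hz, map_mul, Complex.abs_conj, habs a ha, ← Complex.sq_abs, sq]
  have him : z.im = 0 := by
    have hs := Complex.sq_abs z
    rw [h2] at hs
    rw [Complex.normSq_apply z, h1] at hs
    nlinarith [hs]
  have hzeq : z = (Complex.normSq u : ℂ) := by
    apply Complex.ext <;> simp [h1, him]
  have : (t a - u) * (starRingEnd ℂ) u = 0 := by
    rw [sub_mul, hz] at *
    rw [hzeq, ← Complex.mul_conj]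
    ring
  have hcu : (starRingEnd ℂ) u ≠ 0 := by simpa using hu
  rcases mul_eq_zero.mp this with h | h
  · exact sub_eq_zero.mp h
  · exact absurd h hcu

lemma aux_key {n k : ℕ} (hk : 3 ≤ k) (E : Finset (Finset (Fin n)))
    (hE : ∀ e ∈ E, e.card = k) (x : Fin n → ℂ)
    (hx : ∀ i, slapC k E x i = 0) (M : ℝ) (hM : ∀ j, Complex.abs (x j) ≤ M)
    (hMpos : 0 < M) (i : Fin n) (hi : Complex.abs (x i) = M)
    (e : Finset (Fin n)) (he : e ∈ E) (hie : i ∈ e) :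
    (∀ j ∈ e, Complex.abs (x j) = M) ∧
      (∏ j ∈ e.erase i, x j = -(x i) ^ (k - 1)) := by
  classical
  set F := E.filter (fun e => i ∈ e) with hF
  have heF : e ∈ F := by simp [hF, Finset.mem_filter, he, hie]
  set u : ℂ := -(x i) ^ (k - 1) with hu
  have hMk : (0:ℝ) < M ^ (k-1) := pow_pos hMpos _
  have habsu : Complex.abs u = M ^ (k-1) := by
    rw [hu, map_neg_eq_map, map_pow, hi]
  have hune : u ≠ 0 := by
    intro h; rw [h, map_zero] at habsu; linarith
  have hsum : ∑ e' ∈ F, ∏ j ∈ e'.erase i, x j = (F.card : ℂ) * u := by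
    have h0 := hx i
    unfold slapC at h0
    have : (hdeg E i : ℂ) = (F.card : ℂ) := by simp [hdeg, hF]
    rw [← hF] at h0
    rw [this] at h0
    rw [hu]
    linear_combination h0
  have hbound : ∀ e' ∈ F, Complex.abs (∏ j ∈ e'.erase i, x j) ≤ M ^ (k-1) := by
    intro e' he'
    obtain ⟨heE, hiE⟩ := Finset.mem_filter.mp he'
    rw [map_prod]
    calc ∏ j ∈ e'.erase i, Complex.abs (x j) ≤ ∏ j ∈ e'.erase i, M :=
        Finset.prod_le_prod (fun _ _ => (Complex.abs.nonneg _)) (fun j _ => hM j)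
      _ = M ^ (k-1) := by
        rw [Finset.prod_const, Finset.card_erase_of_mem hiE, hE e' heE]
  have habs_each : ∀ e' ∈ F, Complex.abs (∏ j ∈ e'.erase i, x j) = M ^ (k-1) := by
    have h1 : (F.card : ℝ) * M^(k-1) ≤ ∑ e' ∈ F, Complex.abs (∏ j ∈ e'.erase i, x j) := by
      have h2 : Complex.abs (∑ e' ∈ F, ∏ j ∈ e'.erase i, x j) = (F.card : ℝ) * M^(k-1) := by
        rw [hsum, map_mul, habsu, Complex.abs_natCast]
      rw [← h2]
      exact Complex.abs.sum_le _ _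
    have h3 : ∑ e' ∈ F, Complex.abs (∏ j ∈ e'.erase i, x j) ≤ ∑ e' ∈ F, M^(k-1) :=
      Finset.sum_le_sum hbound
    rw [Finset.sum_const, nsmul_eq_mul] at h3
    have heq : ∑ e' ∈ F, Complex.abs (∏ j ∈ e'.erase i, x j) = ∑ e' ∈ F, M^(k-1) := by
      rw [Finset.sum_const, nsmul_eq_mul]; linarith
    exact (Finset.sum_eq_sum_iff_of_le hbound).mp heq
  have hteq : ∀ e' ∈ F, ∏ j ∈ e'.erase i, x j = u := by
    apply aux_all_eq F _ u hune
    · intro a ha; rw [habs_each a ha, habsu]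
    · exact hsum
  constructor
  · intro j hje
    by_cases hji : j = i
    · rw [hji, hi]
    · have hj' : j ∈ e.erase i := Finset.mem_erase.mpr ⟨hji, hje⟩
      have hprod : ∏ j' ∈ e.erase i, Complex.abs (x j') = M ^ (k-1) := by
        rw [← map_prod]; exact habs_each e heF
      have hsplit : Complex.abs (x j) * ∏ j' ∈ (e.erase i).erase j, Complex.abs (x j')
          = M ^ (k-1) := by
        have := Finset.mul_prod_erase (e.erase i) (fun j' => Complex.abs (x j')) hj'
        rw [this, hprod]
      have hrest : ∏ j' ∈ (e.erase i).erase j, Complex.abs (x j') ≤ M ^ (k-2) := by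
        calc ∏ j' ∈ (e.erase i).erase j, Complex.abs (x j')
            ≤ ∏ j' ∈ (e.erase i).erase j, M :=
            Finset.prod_le_prod (fun _ _ => (Complex.abs.nonneg _)) (fun j' _ => hM j')
          _ = M ^ (k-2) := by
            rw [Finset.prod_const, Finset.card_erase_of_mem hj',
              Finset.card_erase_of_mem hie, hE e he]
            congr 1
      have hk2 : (0:ℝ) < M ^ (k-2) := pow_pos hMpos _
      have hMeq : M ^ (k-1) = M * M ^ (k-2) := by
        rw [← pow_succ']
        congr 1
        omega
      have hge : M * M ^ (k-2) ≤ Complex.abs (x j) * M ^ (k-2) := by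
        calc M * M ^ (k-2) = M ^ (k-1) := hMeq.symm
          _ = Complex.abs (x j) * ∏ j' ∈ (e.erase i).erase j, Complex.abs (x j') :=
              hsplit.symm
          _ ≤ Complex.abs (x j) * M ^ (k-2) := by
              apply mul_le_mul_of_nonneg_left hrest (Complex.abs.nonneg _)
      have : M ≤ Complex.abs (x j) := le_of_mul_le_mul_right hge hk2
      linarith [hM j]
  · exact hteq e heF

theorem stmt_6 {n k : ℕ} (hk : 3 ≤ k) (hn : k ≤ n) (hkodd : Odd k)
    (E : Finset (Finset (Fin n))) (hE : ∀ e ∈ E, e.card = k)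
    (hconn : HConnected E) (hne : E.Nonempty) :
    ¬ ∃ x : Fin n → ℂ, x ≠ 0 ∧ ∀ i, slapC k E x i = 0 := by
  rintro ⟨x, hx0, hx⟩
  have hn0 : 0 < n := lt_of_lt_of_le (by omega) hn
  obtain ⟨i0, -, hi0max⟩ := Finset.exists_max_image Finset.univ
    (fun j => Complex.abs (x j)) ⟨⟨0, hn0⟩, Finset.mem_univ _⟩
  set M := Complex.abs (x i0) with hMdef
  have hM : ∀ j, Complex.abs (x j) ≤ M := fun j => hi0max j (Finset.mem_univ j)
  have hMpos : 0 < M := by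
    obtain ⟨j, hj⟩ := Function.ne_iff.mp hx0
    have : (0:ℝ) < Complex.abs (x j) := by
      simpa [AbsoluteValue.pos_iff] using hj
    linarith [hM j]
  obtain ⟨e0, he0⟩ := hne
  have he0card := hE e0 he0
  have he0ne : e0.Nonempty := by
    rw [← Finset.card_pos, he0card]; omega
  obtain ⟨j0, hj0⟩ := he0ne
  have hPmj0 : Complex.abs (x j0) = M := by
    by_cases hij : i0 = j0
    · rw [← hij]
    · obtain ⟨m, es, hesE, hi0es, hj0es, hint⟩ := hconn i0 j0 hij
      have hall : ∀ r : Fin (m+1), ∀ j ∈ es r, Complex.abs (x j) = M := by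
        intro r
        induction r using Fin.induction with
        | zero => exact (aux_key hk E hE x hx M hM hMpos i0 rfl (es 0) (hesE 0) hi0es).1
        | succ r ih =>
          obtain ⟨v, hv⟩ := hint r
          obtain ⟨hv1, hv2⟩ := Finset.mem_inter.mp hv
          exact (aux_key hk E hE x hx M hM hMpos v (ih v hv1) (es r.succ) (hesE _) hv2).1
      exact hall (Fin.last m) j0 hj0es
  have he0all : ∀ j ∈ e0, Complex.abs (x j) = M :=
    (aux_key hk E hE x hx M hM hMpos j0 hPmj0 e0 he0 hj0).1
  set P := ∏ j ∈ e0, x j with hPdef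
  have hkey : ∀ i ∈ e0, x i ^ k = -P := by
    intro i hi
    have hb := (aux_key hk E hE x hx M hM hMpos i (he0all i hi) e0 he0 hi).2
    have hm := Finset.mul_prod_erase e0 x hi
    rw [hb] at hm
    have hxik : x i * x i ^ (k-1) = x i ^ k := by
      rw [← pow_succ']
      congr 1
      omega
    rw [hPdef, ← hm, ← hxik]
    ring
  have hPne : P ≠ 0 := by
    rw [hPdef]
    apply Finset.prod_ne_zero_iff.mpr
    intro j hj h0
    have := he0all j hj
    rw [h0, map_zero] at this
    linarith
  have hPk : P ^ k = -(P ^ k) := by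
    calc P ^ k = ∏ i ∈ e0, x i ^ k := by rw [hPdef, Finset.prod_pow]
      _ = ∏ i ∈ e0, (-P) := Finset.prod_congr rfl hkey
      _ = (-P) ^ e0.card := by rw [Finset.prod_const]
      _ = (-P) ^ k := by rw [he0card]
      _ = -(P ^ k) := Odd.neg_pow hkodd P
  have : P ^ k = 0 := by linear_combination (1/2 : ℂ) * hPk
  have hkne : k ≠ 0 := by omega
  exact hPne (pow_eq_zero_iff hkne |>.mp this)
end

section
/- Let k be even and let G be a connected k-uniform hypergraph on {1,…,n} with at least one edge. Then there exists a nonzero real vector x with ((D−A) x^{k−1})_i = 0 for all i which attains both positive and negative values if and only if G is even-bipartite, i.e., there exists a subset S ⊆ V with S ≠ ∅ and V∖S ≠ ∅ such that |e ∩ S| is even for every edge e ∈ E. -/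
open Finset

/-- product of ±1 signs determined by membership in `S`. -/
lemma aux_prod_sign {n : ℕ} (S s : Finset (Fin n)) :
    ∏ j ∈ s, (if j ∈ S then (-1 : ℝ) else 1) = (-1 : ℝ) ^ (s ∩ S).card := by
  rw [← Finset.prod_filter_mul_prod_filter_not s (· ∈ S)]
  rw [Finset.prod_congr rfl (fun j hj => if_pos (Finset.mem_filter.mp hj).2),
      Finset.prod_congr rfl (fun j hj => if_neg (Finset.mem_filter.mp hj).2),
      Finset.prod_const, Finset.prod_const_one, mul_one, Finset.filter_mem_eq_inter]

/-- positive product of nonzero reals has an even number of negative factors. -/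
lemma aux_even_neg {n : ℕ} {s : Finset (Fin n)} {f : Fin n → ℝ}
    (h0 : ∀ j ∈ s, f j ≠ 0) (hp : 0 < ∏ j ∈ s, f j) :
    Even (s.filter (fun j => f j < 0)).card := by
  have hsplit := Finset.prod_filter_mul_prod_filter_not s (fun j => f j < 0) f
  have hpos : 0 < ∏ j ∈ s.filter (fun j => ¬ f j < 0), f j := by
    apply Finset.prod_pos
    intro j hj
    obtain ⟨hjs, hjn⟩ := Finset.mem_filter.mp hj
    exact lt_of_le_of_ne (not_lt.mp hjn) (Ne.symm (h0 j hjs))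
  have hneg : 0 < ∏ j ∈ s.filter (fun j => f j < 0), f j := by
    by_contra hcon
    push_neg at hcon
    nlinarith [hsplit]
  by_contra hodd
  rw [Nat.not_even_iff_odd] at hodd
  have heq : ∏ j ∈ s.filter (fun j => f j < 0), f j
      = (-1 : ℝ) ^ (s.filter (fun j => f j < 0)).card *
        ∏ j ∈ s.filter (fun j => f j < 0), (-(f j)) := by
    rw [← Finset.prod_const, ← Finset.prod_mul_distrib]
    exact Finset.prod_congr rfl (fun j _ => by ring)
  have hpos2 : 0 < ∏ j ∈ s.filter (fun j => f j < 0), (-(f j)) := by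
    apply Finset.prod_pos
    intro j hj
    have := (Finset.mem_filter.mp hj).2
    linarith
  rw [hodd.neg_one_pow] at heq
  nlinarith

/-- Key equality lemma: at a vertex of maximal modulus, all vertices of incident
edges have maximal modulus and the edge product is positive. -/
lemma key_eq {n k : ℕ} (hk : 3 ≤ k) (hkeven : Even k) {E : Finset (Finset (Fin n))}
    (hE : ∀ e ∈ E, e.card = k) {x : Fin n → ℝ} {M : ℝ} (hM : 0 < M)
    (hle : ∀ j, |x j| ≤ M) {i : Fin n} (hxi : |x i| = M)
    (hl : lapR k E x i = 0) {e : Finset (Fin n)} (he : e ∈ E) (hie : i ∈ e) :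
    (∀ j ∈ e, |x j| = M) ∧ 0 < ∏ j ∈ e, x j := by
  set F := E.filter (fun e => i ∈ e) with hF
  have hsum : ∑ e ∈ F, ∏ j ∈ e.erase i, x j = (hdeg E i : ℝ) * x i ^ (k - 1) := by
    unfold lapR at hl; linarith
  have hxk : x i ^ k = M ^ k := by rw [← hkeven.pow_abs (x i), hxi]
  have hMk1 : M * M ^ (k - 1) = M ^ k := by
    have h1 : k - 1 + 1 = k := by omega
    rw [mul_comm, ← pow_succ, h1]
  have habsP : ∀ e' ∈ F, |∏ j ∈ e'.erase i, x j| ≤ M ^ (k - 1) := by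
    intro e' he'
    obtain ⟨he'E, hie'⟩ := Finset.mem_filter.mp he'
    rw [Finset.abs_prod]
    calc ∏ j ∈ e'.erase i, |x j| ≤ ∏ j ∈ e'.erase i, M :=
          Finset.prod_le_prod (fun j _ => abs_nonneg _) (fun j _ => hle j)
      _ = M ^ (k - 1) := by
          rw [Finset.prod_const, Finset.card_erase_of_mem hie', hE e' he'E]
  have hterm_le : ∀ e' ∈ F, x i * ∏ j ∈ e'.erase i, x j ≤ M ^ k := by
    intro e' he'
    calc x i * ∏ j ∈ e'.erase i, x j ≤ |x i * ∏ j ∈ e'.erase i, x j| := le_abs_self _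
      _ = |x i| * |∏ j ∈ e'.erase i, x j| := abs_mul _ _
      _ ≤ M * M ^ (k - 1) := by
          rw [hxi]
          exact mul_le_mul_of_nonneg_left (habsP e' he') (le_of_lt hM)
      _ = M ^ k := hMk1
  have hsum' : ∑ e' ∈ F, x i * ∏ j ∈ e'.erase i, x j = ∑ e' ∈ F, M ^ k := by
    rw [← Finset.mul_sum, hsum, Finset.sum_const]
    have h1 : k - 1 + 1 = k := by omega
    have : x i * ((hdeg E i : ℝ) * x i ^ (k - 1))
        = (hdeg E i : ℝ) * (x i ^ (k - 1) * x i) := by ring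
    rw [this, ← pow_succ, h1, hxk, nsmul_eq_mul]
    rfl
  have heach := (Finset.sum_eq_sum_iff_of_le hterm_le).mp hsum'
  have hFe : e ∈ F := Finset.mem_filter.mpr ⟨he, hie⟩
  have heq : x i * ∏ j ∈ e.erase i, x j = M ^ k := heach e hFe
  have hprod : ∏ j ∈ e, x j = M ^ k := by
    rw [← Finset.mul_prod_erase e x hie, heq]
  have hPabs : |∏ j ∈ e.erase i, x j| = M ^ (k - 1) := by
    have h1 : |x i| * |∏ j ∈ e.erase i, x j| = M ^ k := by
      rw [← abs_mul, heq, abs_of_pos (pow_pos hM k)]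
    rw [hxi] at h1
    apply mul_left_cancel₀ hM.ne'
    rw [h1, hMk1]
  have habs : ∀ j ∈ e.erase i, |x j| = M := by
    intro j hj
    by_contra hne
    have hlt : |x j| < M := lt_of_le_of_ne (hle j) hne
    have hcard : ((e.erase i).erase j).card = k - 2 := by
      rw [Finset.card_erase_of_mem hj, Finset.card_erase_of_mem hie, hE e he]
      omega
    have h2 : ∏ t ∈ (e.erase i).erase j, |x t| ≤ M ^ (k - 2) := by
      calc ∏ t ∈ (e.erase i).erase j, |x t| ≤ ∏ t ∈ (e.erase i).erase j, M :=
            Finset.prod_le_prod (fun t _ => abs_nonneg _) (fun t _ => hle t)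
        _ = M ^ (k - 2) := by rw [Finset.prod_const, hcard]
    have h3 : ∏ t ∈ e.erase i, |x t| =
        |x j| * ∏ t ∈ (e.erase i).erase j, |x t| :=
      (Finset.mul_prod_erase _ _ hj).symm
    have hMk2 : M * M ^ (k - 2) = M ^ (k - 1) := by
      have h1 : k - 2 + 1 = k - 1 := by omega
      rw [mul_comm, ← pow_succ, h1]
    have hfin : M ^ (k - 1) < M ^ (k - 1) := by
      calc M ^ (k - 1) = ∏ t ∈ e.erase i, |x t| := by
            rw [← Finset.abs_prod, hPabs]
        _ = |x j| * ∏ t ∈ (e.erase i).erase j, |x t| := h3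
        _ ≤ |x j| * M ^ (k - 2) := by
            apply mul_le_mul_of_nonneg_left h2 (abs_nonneg _)
        _ < M * M ^ (k - 2) := by
            apply mul_lt_mul_of_pos_right hlt (pow_pos hM _)
        _ = M ^ (k - 1) := hMk2
    exact lt_irrefl _ hfin
  constructor
  · intro j hj
    rcases eq_or_ne j i with rfl | hji
    · exact hxi
    · exact habs j (Finset.mem_erase.mpr ⟨hji, hj⟩)
  · rw [hprod]; exact pow_pos hM k

/-- Propagation of a property along a connecting chain of edges. -/
lemma chain_prop {n : ℕ} {E : Finset (Finset (Fin n))} {P : Fin n → Prop}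
    (hstep : ∀ v, P v → ∀ e ∈ E, v ∈ e → ∀ w ∈ e, P w)
    {m : ℕ} {es : Fin (m + 1) → Finset (Fin n)} (hes : ∀ r, es r ∈ E)
    {i : Fin n} (hi : i ∈ es 0) (hPi : P i)
    (hchain : ∀ r : Fin m, (es r.castSucc ∩ es r.succ).Nonempty) :
    ∀ r, ∀ w ∈ es r, P w := by
  have H : ∀ r : ℕ, ∀ (h : r < m + 1), ∀ w ∈ es ⟨r, h⟩, P w := by
    intro r
    induction r with
    | zero =>
      intro h w hw
      exact hstep i hPi (es 0) (hes 0) hi w hw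
    | succ r ih =>
      intro h w hw
      have hr : r < m + 1 := by omega
      have hrm : r < m := by omega
      obtain ⟨v, hv⟩ := hchain ⟨r, hrm⟩
      have hv1 : v ∈ es ⟨r, hr⟩ := by
        have h1 := (Finset.mem_inter.mp hv).1
        simpa [Fin.castSucc_mk] using h1
      have hv2 : v ∈ es ⟨r + 1, h⟩ := by
        have h1 := (Finset.mem_inter.mp hv).2
        simpa [Fin.succ_mk] using h1
      exact hstep v (ih hr v hv1) _ (hes _) hv2 w hw
  intro r w hw
  exact H r.1 r.2 w (by simpa using hw)

theorem stmt_12 {n k : ℕ} (hk : 3 ≤ k) (hn : k ≤ n) (hkeven : Even k)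
    (E : Finset (Finset (Fin n))) (hE : ∀ e ∈ E, e.card = k)
    (hconn : HConnected E) (hne : E.Nonempty) :
    (∃ x : Fin n → ℝ, x ≠ 0 ∧ (∃ i, 0 < x i) ∧ (∃ i, x i < 0) ∧
        ∀ i, lapR k E x i = 0) ↔
      ∃ S : Finset (Fin n), S.Nonempty ∧ Sᶜ.Nonempty ∧
        ∀ e ∈ E, Even (e ∩ S).card := by
  constructor
  · rintro ⟨x, hx0, ⟨ip, hip⟩, ⟨im, him⟩, hlap⟩
    obtain ⟨i0, -, hmax⟩ :=
      Finset.exists_max_image Finset.univ (fun j => |x j|) ⟨ip, Finset.mem_univ ip⟩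
    set M := |x i0| with hMdef
    have hle : ∀ j, |x j| ≤ M := fun j => hmax j (Finset.mem_univ j)
    have hM : 0 < M := lt_of_lt_of_le hip (le_trans (le_abs_self _) (hle ip))
    have hall : ∀ j, |x j| = M := by
      intro j
      by_cases hji : j = i0
      · rw [hji]
      · obtain ⟨m, es, hes, hi0, hj, hchain⟩ := hconn i0 j (fun h => hji h.symm)
        exact chain_prop
          (fun v hv e heE hve w hwe =>
            (key_eq hk hkeven hE hM hle hv (hlap v) heE hve).1 w hwe)
          hes hi0 rfl hchain (Fin.last m) j hj
    refine ⟨Finset.univ.filter (fun j => x j < 0),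
      ⟨im, Finset.mem_filter.mpr ⟨Finset.mem_univ _, him⟩⟩,
      ⟨ip, ?_⟩, ?_⟩
    · rw [Finset.mem_compl]
      intro hc
      have := (Finset.mem_filter.mp hc).2
      linarith
    · intro e he
      obtain ⟨v, hv⟩ := Finset.card_pos.mp (by rw [hE e he]; omega)
      have hp := (key_eq hk hkeven hE hM hle (hall v) (hlap v) he hv).2
      have hinter : e ∩ Finset.univ.filter (fun j => x j < 0)
          = e.filter (fun j => x j < 0) := by
        ext j
        simp only [Finset.mem_inter, Finset.mem_filter, Finset.mem_univ, true_and]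
      rw [hinter]
      apply aux_even_neg _ hp
      intro j _
      have := hall j
      intro h0
      rw [h0, abs_zero] at this
      exact hM.ne this
  · rintro ⟨S, ⟨s0, hs0⟩, ⟨t0, ht0⟩, hSev⟩
    have hkodd : Odd (k - 1) := Nat.Even.sub_odd (by omega) hkeven odd_one
    refine ⟨fun i => if i ∈ S then -1 else 1, ?_, ⟨t0, ?_⟩, ⟨s0, ?_⟩, ?_⟩
    · intro h
      have := congrFun h s0
      simp only [hs0, if_pos, Pi.zero_apply] at this
      norm_num at this
    · have ht0' : t0 ∉ S := Finset.mem_compl.mp ht0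
      simp [ht0']
    · simp [hs0]
    · intro i
      unfold lapR
      have hprod : ∀ e ∈ E.filter (fun e => i ∈ e),
          (∏ j ∈ e.erase i, (if j ∈ S then (-1 : ℝ) else 1))
            = (if i ∈ S then (-1 : ℝ) else 1) := by
        intro e hef
        obtain ⟨heE, hie⟩ := Finset.mem_filter.mp hef
        rw [aux_prod_sign]
        by_cases hiS : i ∈ S
        · have hi' : i ∈ e ∩ S := Finset.mem_inter.mpr ⟨hie, hiS⟩
          have heq : (e.erase i ∩ S) = (e ∩ S).erase i := by
            ext j
            simp only [Finset.mem_inter, Finset.mem_erase]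
            tauto
          rw [heq, Finset.card_erase_of_mem hi']
          have hodd : Odd ((e ∩ S).card - 1) :=
            Nat.Even.sub_odd (Finset.card_pos.mpr ⟨i, hi'⟩) (hSev e heE) odd_one
          rw [hodd.neg_one_pow, if_pos hiS]
        · have heq : e.erase i ∩ S = e ∩ S := by
            ext j
            simp only [Finset.mem_inter, Finset.mem_erase]
            constructor
            · rintro ⟨⟨-, hje⟩, hjS⟩; exact ⟨hje, hjS⟩
            · rintro ⟨hje, hjS⟩
              exact ⟨⟨fun h => hiS (h ▸ hjS), hje⟩, hjS⟩
          rw [heq, ((hSev e heE)).neg_one_pow, if_neg hiS]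
      rw [Finset.sum_congr rfl hprod, Finset.sum_const, nsmul_eq_mul]
      have hxpow : (if i ∈ S then (-1 : ℝ) else 1) ^ (k - 1)
          = (if i ∈ S then (-1 : ℝ) else 1) := by
        by_cases hiS : i ∈ S <;> simp [hiS, hkodd.neg_one_pow]
      rw [hxpow]
      unfold hdeg
      ring
end
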